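/- Let x = [x_{ij}] ∈ M_n(M_k) and y = [y_{ij}] ∈ M_n(M_k) both be positive semidefinite. Then Σ_{i,j=1}^n x_{ij} ⊗ y_{ji}^t is a positive semidefinite element of M_k ⊗ M_k. -/

import Mathlib

open Matrix Kronecker ComplexOrder

private lemma sum_reverse4 {α β : Type*} [Fintype α] [Fintype β]
    (f : (α × α) → β → β → ℂ) :
    (∑ pq : α × α, ∑ j : β, ∑ i : β, f pq j i)
      = ∑ i : β, ∑ j : β, ∑ q : α, ∑ p : α, f (p, q) j i := by
  simp only [Fintype.sum_prod_type]
  rw [Finset.sum_comm]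
  calc ∑ y : α, ∑ x : α, ∑ j : β, ∑ i : β, f (x, y) j i
      = ∑ y : α, ∑ j : β, ∑ x : α, ∑ i : β, f (x, y) j i :=
        Finset.sum_congr rfl fun y _ => Finset.sum_comm
    _ = ∑ j : β, ∑ y : α, ∑ x : α, ∑ i : β, f (x, y) j i := Finset.sum_comm
    _ = ∑ j : β, ∑ y : α, ∑ i : β, ∑ x : α, f (x, y) j i :=
        Finset.sum_congr rfl fun j _ => Finset.sum_congr rfl fun y _ => Finset.sum_comm
    _ = ∑ j : β, ∑ i : β, ∑ y : α, ∑ x : α, f (x, y) j i :=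
        Finset.sum_congr rfl fun j _ => Finset.sum_comm
    _ = ∑ i : β, ∑ j : β, ∑ q : α, ∑ p : α, f (p, q) j i := Finset.sum_comm

/-- Let `x = [x_{ij}]` and `y = [y_{ij}]` in `M_n(M_k)` (modeled as matrices indexed by
`Fin n × Fin k`, the `(i,j)` block being `(a, b) ↦ x (i,a) (j,b)`) both be positive
semidefinite. Then `∑_{i,j} x_{ij} ⊗ y_{ji}ᵀ` is a positive semidefinite element of
`M_k ⊗ M_k`. -/
theorem stmt_7 {n k : ℕ} (x y : Matrix (Fin n × Fin k) (Fin n × Fin k) ℂ)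
    (hx : x.PosSemidef) (hy : y.PosSemidef) :
    (∑ i : Fin n, ∑ j : Fin n,
      (Matrix.of fun a b : Fin k => x (i, a) (j, b)) ⊗ₖ
        (Matrix.of fun a b : Fin k => y (j, a) (i, b))ᵀ).PosSemidef := by
  obtain ⟨A, hA⟩ : ∃ A : Matrix (Fin n × Fin k) (Fin n × Fin k) ℂ, x = Aᴴ * A := by
    classical
    open scoped MatrixOrder Matrix.Norms.L2Operator in
    exact CStarAlgebra.nonneg_iff_eq_star_mul_self.mp hx.nonneg
  obtain ⟨B, hB⟩ : ∃ B : Matrix (Fin n × Fin k) (Fin n × Fin k) ℂ, y = Bᴴ * B := by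
    classical
    open scoped MatrixOrder Matrix.Norms.L2Operator in
    exact CStarAlgebra.nonneg_iff_eq_star_mul_self.mp hy.nonneg
  set M : Matrix ((Fin n × Fin k) × (Fin n × Fin k)) (Fin k × Fin k) ℂ :=
    Matrix.of fun pq bd => ∑ j : Fin n, A pq.1 (j, bd.1) * star (B pq.2 (j, bd.2)) with hM
  have key : (∑ i : Fin n, ∑ j : Fin n,
      (Matrix.of fun a b : Fin k => x (i, a) (j, b)) ⊗ₖ
        (Matrix.of fun a b : Fin k => y (j, a) (i, b))ᵀ) = Mᴴ * M := by
    ext ⟨a, c⟩ ⟨b, d⟩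
    have hx' : ∀ i j, x (i, a) (j, b) = ∑ p, star (A p (i, a)) * A p (j, b) := by
      intro i j; rw [hA]; simp [Matrix.mul_apply, Matrix.conjTranspose_apply]
    have hy' : ∀ i j, y (j, d) (i, c) = ∑ q, star (B q (j, d)) * B q (i, c) := by
      intro i j; rw [hB]; simp [Matrix.mul_apply, Matrix.conjTranspose_apply]
    simp only [Matrix.sum_apply, Matrix.kroneckerMap_apply, Matrix.transpose_apply,
      Matrix.of_apply, Matrix.mul_apply, Matrix.conjTranspose_apply, hM, hx', hy',
      star_sum, star_mul', star_star, Finset.sum_mul, Finset.mul_sum]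
    rw [sum_reverse4]
    refine Finset.sum_congr rfl fun i _ => Finset.sum_congr rfl fun j _ =>
      Finset.sum_congr rfl fun q _ => Finset.sum_congr rfl fun p _ => by ring
  rw [key]
  exact Matrix.posSemidef_conjTranspose_mul_self M
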